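/- If A is a unique factorization domain, then every invertible A-module (finitely generated projective of rank 1) is isomorphic to A; equivalently, Pic(A) is trivial. -/

import Mathlib

open TensorProduct
set_option maxHeartbeats 2000000
set_option synthInstance.maxHeartbeats 200000

theorem stmt_19 (A : Type*) [CommRing A] [IsDomain A] [UniqueFactorizationMonoid A]
    (L : Type*) [AddCommGroup L] [Module A L]
    [Module.Finite A L] [Module.Projective A L]
    (hrank : ∀ (p : Ideal A), p.IsPrime →
      Module.finrank (FractionRing (A ⧸ p)) ((FractionRing (A ⧸ p)) ⊗[A] L) = 1) :
    Nonempty (L ≃ₗ[A] A) := by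
  classical
  letI : NormalizationMonoid A := (UniqueFactorizationMonoid.normalizationMonoid (α := A)).toNormalizationMonoid
  letI : NormalizedGCDMonoid A := UniqueFactorizationMonoid.toNormalizedGCDMonoid A
  haveI : (⊥ : Ideal A).IsPrime := Ideal.bot_prime
  set B : Type _ := A ⧸ (⊥ : Ideal A) with hBdef
  set F : Type _ := FractionRing B with hFdef
  have h1 : Module.finrank F (F ⊗[A] L) = 1 := hrank ⊥ inferInstance
  -- injectivity of algebraMap A F
  have hmk : Function.Injective (Ideal.Quotient.mk (⊥ : Ideal A)) := by
    intro x y h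
    have := Ideal.Quotient.eq.mp h
    simpa [sub_eq_zero] using this
  have halg : Function.Injective (algebraMap A F) := by
    rw [IsScalarTower.algebraMap_eq A B F]
    refine (IsFractionRing.injective B F).comp ?_
    intro x y h
    exact hmk (by simpa [Ideal.Quotient.algebraMap_eq] using h)
  -- projective splitting
  obtain ⟨n, π, hπ⟩ := Module.Finite.exists_fin' A L
  obtain ⟨s, hs⟩ := Module.projective_lifting_property π LinearMap.id hπ
  have hs' : ∀ y, π (s y) = y := fun y => congrArg (fun g => g y) hs
  -- injectivity of L → F ⊗ L
  let ιmap : L →ₗ[A] F ⊗[A] L := (TensorProduct.mk A F L) 1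
  have hι0 : ∀ y : L, ιmap y = 0 → y = 0 := by
    intro y hy
    have h2 : (LinearMap.lTensor F s) (((1:F) ⊗ₜ[A] y : F ⊗[A] L)) = 0 := by
      have : ιmap y = (1:F) ⊗ₜ[A] y := rfl
      rw [← this, hy, map_zero]
    rw [LinearMap.lTensor_tmul] at h2
    have h3 := congrArg (TensorProduct.piScalarRight A F F (Fin n)) h2
    rw [LinearEquiv.map_zero] at h3
    have h4 : ∀ j, (s y j) • (1:F) = 0 := by
      intro j
      have := congrFun h3 j
      simpa [TensorProduct.piScalarRightHom_tmul] using this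
    have h5 : s y = 0 := by
      funext j
      have := h4 j
      rw [Algebra.smul_def, mul_one] at this
      exact halg (by simpa using this)
    have := hs' y
    rw [h5, map_zero] at this
    exact this.symm
  have hι : Function.Injective ιmap := by
    rw [← LinearMap.ker_eq_bot, LinearMap.ker_eq_bot']
    exact hι0
  -- equiv F ⊗ L ≃ F
  let bE : Module.Basis (Fin 1) F (F ⊗[A] L) := Module.finBasisOfFinrankEq F (F ⊗[A] L) h1
  let E : (F ⊗[A] L) ≃ₗ[F] F := bE.equivFun ≪≫ₗ LinearEquiv.funUnique (Fin 1) F F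
  let E' : (F ⊗[A] L) ≃ₗ[A] F := E.restrictScalars A
  let φ : L →ₗ[A] F := E'.toLinearMap ∘ₗ ιmap
  have hφ : Function.Injective φ := E'.injective.comp hι
  -- L nontrivial
  haveI hLnt : Nontrivial L := by
    by_contra hcon
    rw [not_nontrivial_iff_subsingleton] at hcon
    have hz : ∀ t : F ⊗[A] L, t = 0 := by
      intro t
      induction t with
      | zero => rfl
      | tmul f y => rw [Subsingleton.elim y 0, TensorProduct.tmul_zero]
      | add u v hu hv => rw [hu, hv, add_zero]
    haveI : Subsingleton (F ⊗[A] L) := ⟨fun a b => by rw [hz a, hz b]⟩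
    rw [Module.finrank_zero_of_subsingleton] at h1
    exact one_ne_zero h1.symm
  -- clear denominators
  have hfrac : ∀ j : Fin n, ∃ (a t : A), t ≠ 0 ∧
      φ (π (Pi.single j 1)) * algebraMap A F t = algebraMap A F a := by
    intro j
    obtain ⟨⟨a, t⟩, ht⟩ := IsLocalization.surj (nonZeroDivisors B) (φ (π (Pi.single j 1)))
    obtain ⟨a', ha'⟩ := Ideal.Quotient.mk_surjective (I := (⊥ : Ideal A)) a
    obtain ⟨t', ht'⟩ := Ideal.Quotient.mk_surjective (I := (⊥ : Ideal A)) (t : B)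
    refine ⟨a', t', ?_, ?_⟩
    · intro h
      apply nonZeroDivisors.ne_zero t.prop
      rw [← ht', h, map_zero]
    · rw [IsScalarTower.algebraMap_eq A B F, RingHom.comp_apply, RingHom.comp_apply,
        Ideal.Quotient.algebraMap_eq, ht', ha']
      exact ht
  choose aa tt htne hteq using hfrac
  set b : A := ∏ j : Fin n, tt j with hbdef
  have hb : b ≠ 0 := Finset.prod_ne_zero_iff.mpr fun j _ => htne j
  set R : Submodule A F := LinearMap.range (Algebra.linearMap A F) with hRdef
  have hmem : ∀ y : L, (b • φ) y ∈ R := by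
    have hgen : ∀ j : Fin n, b • φ (π (Pi.single j 1)) ∈ R := by
      intro j
      have hbsplit : b = tt j * ∏ k ∈ Finset.univ.erase j, tt k :=
        (Finset.mul_prod_erase Finset.univ tt (Finset.mem_univ j)).symm
      rw [Algebra.smul_def, hbsplit, map_mul, mul_comm (algebraMap A F (tt j)), mul_assoc,
        mul_comm (algebraMap A F (tt j)), hteq j, ← map_mul]
      exact ⟨_, rfl⟩
    have hspan : Submodule.span A (Set.range fun j : Fin n => π (Pi.single j 1)) = ⊤ := by
      have h6 : Submodule.span A (Set.range fun j : Fin n => (Pi.single j 1 : Fin n → A)) = ⊤ := by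
        rw [eq_top_iff]
        intro v _
        have hv : v = ∑ i : Fin n, v i • (Pi.single i 1 : Fin n → A) := by
          funext j; simp [Pi.single_apply, Finset.sum_apply]
        rw [hv]
        exact Submodule.sum_mem _ fun i _ =>
          Submodule.smul_mem _ _ (Submodule.subset_span ⟨i, rfl⟩)
      have h7 : (Set.range fun j : Fin n => π (Pi.single j 1)) =
          π '' (Set.range fun j : Fin n => (Pi.single j 1 : Fin n → A)) := by
        rw [← Set.range_comp]; rfl
      rw [h7, ← Submodule.map_span, h6, Submodule.map_top, LinearMap.range_eq_top.mpr hπ]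
    intro y
    have hle : (⊤ : Submodule A L) ≤ Submodule.comap (b • φ) R := by
      rw [← hspan]
      refine Submodule.span_le.mpr ?_
      rintro _ ⟨j, rfl⟩
      simpa using hgen j
    simpa using hle (Submodule.mem_top (x := y))
  -- the injection ψ : L →ₗ[A] A
  have halg' : Function.Injective (Algebra.linearMap A F) := halg
  let e : A ≃ₗ[A] R := LinearEquiv.ofInjective (Algebra.linearMap A F) halg'
  let ψ : L →ₗ[A] A := e.symm.toLinearMap ∘ₗ LinearMap.codRestrict R (b • φ) hmem
  have hψ : ∀ y, algebraMap A F (ψ y) = b • φ y := by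
    intro y
    have h8 : e (ψ y) = LinearMap.codRestrict R (b • φ) hmem y := by
      simp only [ψ, LinearMap.comp_apply, LinearEquiv.coe_toLinearMap, e.apply_symm_apply]
    have h9 : (Algebra.linearMap A F) (ψ y) = (b • φ) y := by
      have h9' := congrArg (fun z : R => (z : F)) h8
      exact h9'
    rw [LinearMap.smul_apply] at h9
    exact h9
  have hψinj : Function.Injective ψ := by
    intro y z h
    apply hφ
    have := congrArg (algebraMap A F) h
    rw [hψ, hψ] at this
    rw [Algebra.smul_def, Algebra.smul_def] at this
    exact mul_left_cancel₀ (fun hh => hb (halg (by simpa using hh))) this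
  -- dual basis
  set x : Fin n → L := fun i => π (Pi.single i 1) with hxdef
  set f : Fin n → (L →ₗ[A] A) := fun i => (LinearMap.proj i) ∘ₗ s with hfdef
  have hdual : ∀ y : L, ∑ i : Fin n, f i y • x i = y := by
    intro y
    have h10 : s y = ∑ i : Fin n, (s y i) • (Pi.single i 1 : Fin n → A) := by
      funext j
      simp [Pi.single_apply, Finset.sum_apply]
    calc ∑ i : Fin n, f i y • x i = π (∑ i : Fin n, (s y i) • (Pi.single i 1 : Fin n → A)) := by
          rw [map_sum]; simp [hfdef, hxdef, map_smul]
      _ = π (s y) := by rw [← h10]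
      _ = y := hs' y
  -- key commutation identity
  have key : ∀ (g : L →ₗ[A] A) (y z : L), ψ z * g y = ψ y * g z := by
    intro g y z
    have h4 : ψ z • y = ψ y • z := hψinj (by
      rw [map_smul, map_smul, smul_eq_mul, smul_eq_mul, mul_comm])
    calc ψ z * g y = g (ψ z • y) := by rw [map_smul, smul_eq_mul]
      _ = g (ψ y • z) := by rw [h4]
      _ = ψ y * g z := by rw [map_smul, smul_eq_mul]
  obtain ⟨z₀, hz₀⟩ := exists_ne (0 : L)
  set c : A := ψ z₀ with hcdef
  have hc : c ≠ 0 := by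
    intro h
    exact hz₀ (hψinj (by rw [map_zero]; exact h))
  set d : Fin n → A := fun i => f i z₀ with hddef
  set u : Fin n → A := fun i => ψ (x i) with hudef
  have hcu : ∀ i j, c ∣ d i * u j := by
    intro i j
    refine ⟨f i (x j), ?_⟩
    have := key (f i) (x j) z₀
    rw [mul_comm (d i) (u j)]
    exact this.symm
  have hsum : ∑ i : Fin n, d i * u i = c := by
    have h11 := congrArg ψ (hdual z₀)
    rw [map_sum] at h11
    simp only [map_smul, smul_eq_mul] at h11
    rw [hcdef, ← h11]
  set D : A := Finset.univ.gcd u with hDdef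
  have hDdvd : ∀ i, D ∣ u i := fun i => Finset.gcd_dvd (Finset.mem_univ i)
  have hD : D ≠ 0 := by
    intro h
    apply hc
    rw [← hsum]
    refine Finset.sum_eq_zero fun i _ => ?_
    have : u i = 0 := zero_dvd_iff.mp (h ▸ hDdvd i)
    rw [this, mul_zero]
  have hkey2 : ∀ i, c ∣ d i * D := by
    intro i
    obtain ⟨d', c', hd', hc', hunit⟩ := extract_gcd (d i) c
    set g0 := gcd (d i) c with hg0
    have he : g0 ≠ 0 := fun h => hc (by rw [hc', h, zero_mul])
    have hrel : IsRelPrime d' c' := gcd_isUnit_iff_isRelPrime.mp hunit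
    have hc'D : c' ∣ D := by
      refine Finset.dvd_gcd fun j _ => ?_
      have h5 : g0 * c' ∣ g0 * (d' * u j) := by
        rw [← hc', ← mul_assoc, ← hd']; exact hcu i j
      exact hrel.symm.dvd_of_dvd_mul_left ((mul_dvd_mul_iff_left he).mp h5)
    rw [hc', hd']
    exact (mul_dvd_mul_left g0 hc'D).trans ⟨d', by ring⟩
  choose t ht using hkey2
  set w : L := ∑ i : Fin n, t i • x i with hwdef
  have hψw : ψ w = D := by
    have h12 : c * ψ w = D * c := by
      rw [hwdef, map_sum, Finset.mul_sum]
      have h12' : ∀ i ∈ Finset.univ, c * ψ (t i • x i) = D * (d i * u i) := by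
        intro i _
        rw [map_smul, smul_eq_mul, ← mul_assoc, ← ht i]; ring
      rw [Finset.sum_congr rfl h12', ← Finset.mul_sum, hsum]
    exact mul_left_cancel₀ hc (h12.trans (mul_comm D c))
  have hdiv : ∀ y : L, D ∣ ψ y := by
    intro y
    have h13 := congrArg ψ (hdual y)
    rw [map_sum] at h13
    simp only [map_smul, smul_eq_mul] at h13
    rw [← h13]
    exact Finset.dvd_sum fun i _ => Dvd.dvd.mul_left (hDdvd i) _
  let ρ : A →ₗ[A] L := LinearMap.toSpanSingleton A L w
  have hρψ : ∀ a : A, ψ (ρ a) = a * D := by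
    intro a
    rw [LinearMap.toSpanSingleton_apply, map_smul, smul_eq_mul, hψw]
  have hbij : Function.Bijective ρ := by
    constructor
    · intro a a' h
      have h14 := congrArg ψ h
      rw [hρψ, hρψ] at h14
      exact mul_right_cancel₀ hD h14
    · intro y
      obtain ⟨a, ha⟩ := hdiv y
      refine ⟨a, hψinj ?_⟩
      rw [hρψ, ha]; ring
  exact ⟨(LinearEquiv.ofBijective ρ hbij).symm⟩
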